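/- Let p, q ≥ 1, let a ∈ Mat_{p,p}(ℂ), b ∈ Mat_{p,q}(ℂ), c ∈ Mat_{q,p}(ℂ), d ∈ Mat_{q,q}(ℂ). Then the map F : Mat_{p,q}(ℂ) → Mat_{p,q}(ℂ), F(z) = (az + b)(cz + d)⁻¹, is complex differentiable at every point z at which cz + d is invertible, and its derivative at such a z, applied to a direction v ∈ Mat_{p,q}(ℂ), equals (a − (az + b)(cz + d)⁻¹c) · v · (cz + d)⁻¹. -/

import Mathlib

set_option linter.unusedSectionVars false
set_option maxHeartbeats 1000000

open Matrix

attribute [local instance] Matrix.normedAddCommGroup Matrix.normedSpace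

namespace MoebiusAux

noncomputable def entryCLM {m n : Type*} [Fintype m] [Fintype n] (i : m) (j : n) :
    Matrix m n ℂ →L[ℂ] ℂ :=
  LinearMap.toContinuousLinearMap
    ((LinearMap.proj j).comp (LinearMap.proj (R := ℂ) (φ := fun _ : m => n → ℂ) i))

lemma differentiable_entry {m n : Type*} [Fintype m] [Fintype n] (i : m) (j : n) :
    Differentiable ℂ (fun M : Matrix m n ℂ => M i j) :=
  (entryCLM i j).differentiable

noncomputable def mulCLM {l m n : Type*} [Fintype l] [Fintype m] [Fintype n] :
    Matrix l m ℂ →L[ℂ] Matrix m n ℂ →L[ℂ] Matrix l n ℂ :=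
  LinearMap.toContinuousLinearMap
    ((LinearMap.toContinuousLinearMap :
        (Matrix m n ℂ →ₗ[ℂ] Matrix l n ℂ) ≃ₗ[ℂ] (Matrix m n ℂ →L[ℂ] Matrix l n ℂ)).toLinearMap.comp
      (LinearMap.mk₂ ℂ (fun x : Matrix l m ℂ => fun y : Matrix m n ℂ => x * y)
        Matrix.add_mul Matrix.smul_mul Matrix.mul_add
        (fun c x y => Matrix.mul_smul x c y)))

@[simp] lemma mulCLM_apply {l m n : Type*} [Fintype l] [Fintype m] [Fintype n]
    (x : Matrix l m ℂ) (y : Matrix m n ℂ) : mulCLM x y = x * y := rfl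

variable {n : Type*} [Fintype n] [DecidableEq n]

lemma differentiable_det :
    Differentiable ℂ (fun M : Matrix n n ℂ => M.det) := by
  have e : (fun M : Matrix n n ℂ => M.det) =
      fun M => ∑ σ : Equiv.Perm n, (Equiv.Perm.sign σ : ℂ) * ∏ i, M (σ i) i :=
    funext fun M => Matrix.det_apply' M
  rw [e]
  refine Differentiable.fun_sum fun σ _ => Differentiable.const_mul ?_ _
  intro M
  exact (HasFDerivAt.finset_prod fun i _ =>
    ((differentiable_entry (σ i) i) M).hasFDerivAt).differentiableAt

lemma differentiable_adjugate :
    Differentiable ℂ (fun M : Matrix n n ℂ => M.adjugate) := by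
  refine differentiable_pi.mpr ?_
  intro i
  rw [differentiable_pi]
  intro j
  have e : (fun M : Matrix n n ℂ => M.adjugate i j) =
      fun M => (M.updateRow j (Pi.single i 1)).det :=
    funext fun M => Matrix.adjugate_apply M i j
  rw [e]
  refine differentiable_det.comp ?_
  refine differentiable_pi.mpr ?_
  intro a
  rw [differentiable_pi]
  intro b
  by_cases h : a = j
  · subst h
    simp only [Matrix.updateRow_apply, if_pos rfl]
    exact differentiable_const _
  · simp only [Matrix.updateRow_apply, if_neg h]
    exact differentiable_entry a b

lemma differentiableAt_inv {A : Matrix n n ℂ} (h : IsUnit A) :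
    DifferentiableAt ℂ (fun M : Matrix n n ℂ => M⁻¹) A := by
  have hdet : A.det ≠ 0 := ((Matrix.isUnit_iff_isUnit_det A).mp h).ne_zero
  have e : (fun M : Matrix n n ℂ => M⁻¹) = fun M => (M.det)⁻¹ • M.adjugate :=
    funext fun M => by rw [Matrix.inv_def, Ring.inverse_eq_inv']
  rw [e]
  exact ((differentiable_det A).inv hdet).smul (differentiable_adjugate A)

end MoebiusAux

open MoebiusAux

theorem moebius_hasFDerivAt (p q : ℕ) (hp : 1 ≤ p) (hq : 1 ≤ q)
    (a : Matrix (Fin p) (Fin p) ℂ) (b : Matrix (Fin p) (Fin q) ℂ)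
    (c : Matrix (Fin q) (Fin p) ℂ) (d : Matrix (Fin q) (Fin q) ℂ)
    (z : Matrix (Fin p) (Fin q) ℂ) (hcd : IsUnit (c * z + d)) :
    ∃ F' : Matrix (Fin p) (Fin q) ℂ →L[ℂ] Matrix (Fin p) (Fin q) ℂ,
      HasFDerivAt (fun z : Matrix (Fin p) (Fin q) ℂ =>
          (a * z + b) * (c * z + d)⁻¹) F' z ∧
      ∀ v : Matrix (Fin p) (Fin q) ℂ,
        F' v = (a - (a * z + b) * (c * z + d)⁻¹ * c) * v * (c * z + d)⁻¹ := by
  classical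
  set u : Matrix (Fin q) (Fin q) ℂ := c * z + d with hu
  have hdetu : u.det ≠ 0 := ((Matrix.isUnit_iff_isUnit_det u).mp hcd).ne_zero
  have huu : u * u⁻¹ = 1 := Matrix.mul_nonsing_inv u (isUnit_iff_ne_zero.mpr hdetu)
  -- the affine maps
  have haffc : ∀ x, HasFDerivAt (fun z' : Matrix (Fin p) (Fin q) ℂ => c * z' + d)
      (mulCLM c) x := fun x => (mulCLM c).hasFDerivAt.add_const d
  have haffa : HasFDerivAt (fun z' : Matrix (Fin p) (Fin q) ℂ => a * z' + b)
      (mulCLM a) z := (mulCLM a).hasFDerivAt.add_const b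
  -- the inverse map
  set g : Matrix (Fin p) (Fin q) ℂ → Matrix (Fin q) (Fin q) ℂ :=
    fun z' => (c * z' + d)⁻¹ with hgdef
  have hgd : DifferentiableAt ℂ g z :=
    (differentiableAt_inv hcd).comp z (haffc z).differentiableAt
  set g' := fderiv ℂ g z with hg'def
  have hg' : HasFDerivAt g g' z := hgd.hasFDerivAt
  -- eventually g z' * (c z' + d) = 1
  have hcont : ContinuousAt (fun z' : Matrix (Fin p) (Fin q) ℂ => (c * z' + d).det) z :=
    (differentiable_det.comp (fun x => (haffc x).differentiableAt)).continuous.continuousAt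
  have hev : (fun z' => g z' * (c * z' + d)) =ᶠ[nhds z]
      (fun _ => (1 : Matrix (Fin q) (Fin q) ℂ)) := by
    filter_upwards [hcont.eventually_ne hdetu] with z' hz'
    exact Matrix.nonsing_inv_mul _ (isUnit_iff_ne_zero.mpr hz')
  -- product rule for g z' * (c z' + d)
  letI : ∀ (i j k l : Type) [Fintype i] [Fintype j] [Fintype k] [Fintype l],
      NormedAddCommGroup (Matrix i j ℂ →L[ℂ] Matrix k l ℂ) :=
    fun _ _ _ _ _ _ _ _ => ContinuousLinearMap.toNormedAddCommGroup
  letI : ∀ (i j k l : Type) [Fintype i] [Fintype j] [Fintype k] [Fintype l],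
      NormedSpace ℂ (Matrix i j ℂ →L[ℂ] Matrix k l ℂ) :=
    fun _ _ _ _ _ _ _ _ => ContinuousLinearMap.toNormedSpace
  set M1 : Matrix (Fin q) (Fin q) ℂ →L[ℂ]
      Matrix (Fin q) (Fin q) ℂ →L[ℂ] Matrix (Fin q) (Fin q) ℂ := mulCLM with hM1
  set M2 : Matrix (Fin p) (Fin q) ℂ →L[ℂ]
      Matrix (Fin q) (Fin q) ℂ →L[ℂ] Matrix (Fin p) (Fin q) ℂ := mulCLM with hM2
  have hc1 : HasFDerivAt (fun y => M1 (g y)) (M1.comp g') z :=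
    (ContinuousLinearMap.hasFDerivAt M1).comp z hg'
  have h1 : HasFDerivAt (fun y => (M1 (g y)) (c * y + d))
      ((M1 (g z)).comp (mulCLM c) + (show Matrix (Fin p) (Fin q) ℂ →L[ℂ] Matrix (Fin q) (Fin q) ℂ from (M1.comp g').flip (c * z + d))) z :=
    hc1.clm_apply (haffc z)
  have h2 : HasFDerivAt (fun y => (M1 (g y)) (c * y + d))
      (0 : Matrix (Fin p) (Fin q) ℂ →L[ℂ] Matrix (Fin q) (Fin q) ℂ) z := by
    refine (hasFDerivAt_const (1 : Matrix (Fin q) (Fin q) ℂ) z).congr_of_eventuallyEq ?_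
    filter_upwards [hev] with z' hz'
    exact hz'
  have hD : (M1 (g z)).comp (mulCLM c) + (show Matrix (Fin p) (Fin q) ℂ →L[ℂ] Matrix (Fin q) (Fin q) ℂ from (M1.comp g').flip (c * z + d)) = 0 :=
    h1.unique h2
  have hg'v : ∀ v, g' v = -(u⁻¹ * (c * v) * u⁻¹) := by
    intro v
    have h0 : g z * (c * v) + g' v * u = 0 := by
      have h := congrFun (congrArg DFunLike.coe hD) v
      simp only [ContinuousLinearMap.add_apply, ContinuousLinearMap.coe_comp',
        Function.comp_apply, ContinuousLinearMap.flip_apply, hM1, mulCLM_apply,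
        ContinuousLinearMap.zero_apply] at h
      exact h
    have h3 : g' v * u = -(u⁻¹ * (c * v)) := by
      have : g z = u⁻¹ := rfl
      rw [this] at h0
      linear_combination (norm := abel) h0
    calc g' v = g' v * (u * u⁻¹) := by rw [huu, Matrix.mul_one]
    _ = (g' v * u) * u⁻¹ := by rw [Matrix.mul_assoc]
    _ = -(u⁻¹ * (c * v)) * u⁻¹ := by rw [h3]
    _ = -(u⁻¹ * (c * v) * u⁻¹) := by rw [Matrix.neg_mul]
  -- product rule for (a z' + b) * g z'
  have hc2 : HasFDerivAt (fun y => M2 (a * y + b)) (M2.comp (mulCLM a)) z :=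
    (ContinuousLinearMap.hasFDerivAt M2).comp z haffa
  have hF : HasFDerivAt (fun y => (M2 (a * y + b)) (g y))
      ((show Matrix (Fin p) (Fin q) ℂ →L[ℂ] Matrix (Fin p) (Fin q) ℂ from (M2 (a * z + b)).comp g') + (show Matrix (Fin p) (Fin q) ℂ →L[ℂ] Matrix (Fin p) (Fin q) ℂ from (M2.comp (mulCLM a)).flip (g z))) z :=
    hc2.clm_apply hg'
  refine ⟨_, hF, ?_⟩
  intro v
  have hgz : g z = u⁻¹ := rfl
  show (a * z + b) * g' v + a * v * g z = _
  simp only [ContinuousLinearMap.add_apply, ContinuousLinearMap.coe_comp', Function.comp_apply,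
    ContinuousLinearMap.flip_apply, hM1, hM2, mulCLM_apply, hgz, hg'v v]
  rw [Matrix.sub_mul, Matrix.sub_mul, Matrix.mul_neg]
  rw [sub_eq_add_neg, add_comm]
  congr 1 <;> simp only [Matrix.mul_assoc]
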